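/- Let I be a symmetric positive-definite d×d matrix with block decomposition I = [[G_1, G_2],[ᵗG_2, G_3]] (G_1 of size r×r), H := [[0,0],[0, G_3^{-1}]], and let I^{1/2} be the positive-definite symmetric square root of I. Then I^{1/2} (I^{-1} − H) I^{1/2} is an orthogonal projection matrix of rank r; in particular it is symmetric and idempotent. -/

import Mathlib

open Matrix

theorem aux_G3_posDef {r s : ℕ} {G1 : Matrix (Fin r) (Fin r) ℝ} {G2 : Matrix (Fin r) (Fin s) ℝ}
    {G3 : Matrix (Fin s) (Fin s) ℝ}
    (hI : Matrix.PosDef (Matrix.fromBlocks G1 G2 G2ᵀ G3)) : G3.PosDef := by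
  refine posDef_iff_dotProduct_mulVec.mpr ⟨?_, ?_⟩
  · exact (Matrix.isHermitian_fromBlocks_iff.mp hI.1).2.2.2
  · intro x hx
    have hne : Sum.elim (0 : Fin r → ℝ) x ≠ 0 := fun h => hx (funext fun i => congrFun h (Sum.inr i))
    have h := hI.dotProduct_mulVec_pos hne
    simpa [Matrix.fromBlocks_mulVec, dotProduct, Fintype.sum_sum_type] using h

theorem aux_rank_eq {r s : ℕ} (S : Matrix (Fin r) (Fin r) ℝ) [Invertible S]
    (B : Matrix (Fin r) (Fin s) ℝ) (C : Matrix (Fin s) (Fin r) ℝ)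
    (M : Matrix (Fin r ⊕ Fin s) (Fin r ⊕ Fin s) ℝ)
    (hM : M = Matrix.fromBlocks S⁻¹ (-(S⁻¹ * B)) (-(C * S⁻¹)) (C * S⁻¹ * B)) :
    M.rank = r := by
  haveI : Invertible S⁻¹ := by rw [← invOf_eq_nonsing_inv]; exact invertibleInvOf
  have hfac : M = Matrix.fromRows S⁻¹ (-(C * S⁻¹)) * Matrix.fromCols 1 (-B) := by
    rw [hM, fromRows_mul_fromCols]
    simp [Matrix.mul_assoc]
  have hup : M.rank ≤ r := by
    rw [hfac]
    exact le_trans (Matrix.rank_mul_le_left _ _)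
      (le_trans (Matrix.rank_le_card_width _) (by simp))
  have hfac2 : (Matrix.fromCols 1 0 : Matrix (Fin r) (Fin r ⊕ Fin s) ℝ) * M *
      (Matrix.fromRows 1 0 : Matrix (Fin r ⊕ Fin s) (Fin r) ℝ) = S⁻¹ := by
    rw [hM, fromCols_mul_fromBlocks]
    simp [fromCols_mul_fromRows]
  have hlow : r ≤ M.rank := by
    have h1 : (S⁻¹).rank = r := by
      rw [Matrix.rank_of_isUnit _ (isUnit_of_invertible _)]; simp
    calc r = ((Matrix.fromCols 1 0 : Matrix (Fin r) (Fin r ⊕ Fin s) ℝ) * M *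
        (Matrix.fromRows 1 0 : Matrix (Fin r ⊕ Fin s) (Fin r) ℝ)).rank := by rw [hfac2, h1]
      _ ≤ ((Matrix.fromCols 1 0 : Matrix (Fin r) (Fin r ⊕ Fin s) ℝ) * M).rank :=
        Matrix.rank_mul_le_left _ _
      _ ≤ M.rank := Matrix.rank_mul_le_right _ _
  exact le_antisymm hup hlow

open scoped ComplexOrder in
/-- The square root of a positive semidefinite matrix, as defined in the older Mathlib
(`Matrix.PosSemidef.sqrt`, since removed). -/
noncomputable def Matrix.PosSemidef.sqrt {n 𝕜 : Type*} [Fintype n] [DecidableEq n] [RCLike 𝕜]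
    {A : Matrix n n 𝕜} (hA : A.PosSemidef) : Matrix n n 𝕜 :=
  hA.1.eigenvectorUnitary.1 * diagonal ((↑) ∘ (√·) ∘ hA.1.eigenvalues) *
    (star hA.1.eigenvectorUnitary : Matrix n n 𝕜)

theorem aux_sqrt_mul_self {n : Type*} [Fintype n] [DecidableEq n] {A : Matrix n n ℝ}
    (hA : A.PosSemidef) : hA.sqrt * hA.sqrt = A := by
  conv_rhs => rw [hA.1.spectral_theorem, Unitary.conjStarAlgAut_apply]
  unfold Matrix.PosSemidef.sqrt
  have hU : (star hA.1.eigenvectorUnitary : Matrix n n ℝ) * (hA.1.eigenvectorUnitary : Matrix n n ℝ) = 1 :=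
    Matrix.UnitaryGroup.star_mul_self _
  simp only [Matrix.mul_assoc]
  rw [← Matrix.mul_assoc (star (hA.1.eigenvectorUnitary : Matrix n n ℝ)), hU, Matrix.one_mul,
    ← Matrix.mul_assoc (diagonal _), diagonal_mul_diagonal]
  congr 2
  ext i j
  by_cases h : i = j <;> simp [diagonal_apply, h, Real.mul_self_sqrt (hA.eigenvalues_nonneg j)]

theorem aux_sqrt_transpose {n : Type*} [Fintype n] [DecidableEq n] {A : Matrix n n ℝ}
    (hA : A.PosSemidef) : (hA.sqrt)ᵀ = hA.sqrt := by
  rw [← conjTranspose_eq_transpose_of_trivial]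
  unfold Matrix.PosSemidef.sqrt
  simp [Matrix.conjTranspose_mul, Matrix.star_eq_conjTranspose, Matrix.mul_assoc]

/-- For a symmetric positive-definite block matrix `I = [[G₁, G₂],[ᵗG₂, G₃]]`,
`H := [[0,0],[0,G₃⁻¹]]` and `I^{1/2}` its positive-definite symmetric square root,
the matrix `I^{1/2} (I⁻¹ − H) I^{1/2}` is an orthogonal projection of rank `r`:
it is symmetric and idempotent. -/
theorem sqrt_mul_sub_mul_sqrt_is_projection {r s : ℕ} (hr : 1 ≤ r) (hs : 1 ≤ s)
    (G1 : Matrix (Fin r) (Fin r) ℝ) (G2 : Matrix (Fin r) (Fin s) ℝ)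
    (G3 : Matrix (Fin s) (Fin s) ℝ)
    (hI : Matrix.PosDef (Matrix.fromBlocks G1 G2 G2ᵀ G3)) :
    ((Matrix.PosSemidef.sqrt hI.posSemidef) *
        ((Matrix.fromBlocks G1 G2 G2ᵀ G3)⁻¹ - Matrix.fromBlocks 0 0 0 G3⁻¹) *
        (Matrix.PosSemidef.sqrt hI.posSemidef))ᵀ =
      (Matrix.PosSemidef.sqrt hI.posSemidef) *
        ((Matrix.fromBlocks G1 G2 G2ᵀ G3)⁻¹ - Matrix.fromBlocks 0 0 0 G3⁻¹) *
        (Matrix.PosSemidef.sqrt hI.posSemidef) ∧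
    ((Matrix.PosSemidef.sqrt hI.posSemidef) *
        ((Matrix.fromBlocks G1 G2 G2ᵀ G3)⁻¹ - Matrix.fromBlocks 0 0 0 G3⁻¹) *
        (Matrix.PosSemidef.sqrt hI.posSemidef)) *
      ((Matrix.PosSemidef.sqrt hI.posSemidef) *
        ((Matrix.fromBlocks G1 G2 G2ᵀ G3)⁻¹ - Matrix.fromBlocks 0 0 0 G3⁻¹) *
        (Matrix.PosSemidef.sqrt hI.posSemidef)) =
      (Matrix.PosSemidef.sqrt hI.posSemidef) *
        ((Matrix.fromBlocks G1 G2 G2ᵀ G3)⁻¹ - Matrix.fromBlocks 0 0 0 G3⁻¹) *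
        (Matrix.PosSemidef.sqrt hI.posSemidef) ∧
    ((Matrix.PosSemidef.sqrt hI.posSemidef) *
        ((Matrix.fromBlocks G1 G2 G2ᵀ G3)⁻¹ - Matrix.fromBlocks 0 0 0 G3⁻¹) *
        (Matrix.PosSemidef.sqrt hI.posSemidef)).rank = r := by
  set I : Matrix (Fin r ⊕ Fin s) (Fin r ⊕ Fin s) ℝ := Matrix.fromBlocks G1 G2 G2ᵀ G3 with hIdef
  set Q := Matrix.PosSemidef.sqrt hI.posSemidef with hQdef
  set H : Matrix (Fin r ⊕ Fin s) (Fin r ⊕ Fin s) ℝ := Matrix.fromBlocks 0 0 0 G3⁻¹ with hHdef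
  have hG3 : G3.PosDef := aux_G3_posDef hI
  have hG3t : G3ᵀ = G3 := by
    have := (Matrix.isHermitian_fromBlocks_iff.mp hI.1).2.2.2
    rwa [Matrix.IsHermitian, conjTranspose_eq_transpose_of_trivial] at this
  have hIt : Iᵀ = I := by
    have := hI.1; rwa [Matrix.IsHermitian, conjTranspose_eq_transpose_of_trivial] at this
  have hQt : Qᵀ = Q := by
    exact aux_sqrt_transpose _
  have hQQ : Q * Q = I := aux_sqrt_mul_self _
  have hIdet : IsUnit I.det := hI.det_pos.ne'.isUnit
  have hG3det : IsUnit G3.det := hG3.det_pos.ne'.isUnit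
  haveI : Invertible I := I.invertibleOfIsUnitDet hIdet
  haveI : Invertible G3 := G3.invertibleOfIsUnitDet hG3det
  haveI hSinv : Invertible (G1 - G2 * ⅟G3 * G2ᵀ) := invertibleOfFromBlocks₂₂Invertible G1 G2 G2ᵀ G3
  set S : Matrix (Fin r) (Fin r) ℝ := G1 - G2 * G3⁻¹ * G2ᵀ with hSdef
  haveI : Invertible S := by rwa [hSdef, ← invOf_eq_nonsing_inv]
  have hInv : I⁻¹ = Matrix.fromBlocks S⁻¹ (-(S⁻¹ * G2 * G3⁻¹)) (-(G3⁻¹ * G2ᵀ * S⁻¹))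
      (G3⁻¹ + G3⁻¹ * G2ᵀ * S⁻¹ * G2 * G3⁻¹) := by
    rw [hIdef, ← invOf_eq_nonsing_inv, invOf_fromBlocks₂₂_eq]
    simp only [invOf_eq_nonsing_inv, hSdef]
  have hM : I⁻¹ - H = Matrix.fromBlocks S⁻¹ (-(S⁻¹ * G2 * G3⁻¹)) (-(G3⁻¹ * G2ᵀ * S⁻¹))
      (G3⁻¹ * G2ᵀ * S⁻¹ * G2 * G3⁻¹) := by
    rw [hInv, hHdef]
    ext (i|i) (j|j) <;> simp [Matrix.fromBlocks]
  have hHIH : H * I * H = H := by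
    rw [hHdef, hIdef]
    simp [Matrix.fromBlocks_multiply, Matrix.nonsing_inv_mul _ hG3det]
  have key : (I⁻¹ - H) * I * (I⁻¹ - H) = I⁻¹ - H := by
    have e2 : I⁻¹ * I = 1 := Matrix.nonsing_inv_mul _ hIdet
    have e3 : I * I⁻¹ = 1 := Matrix.mul_nonsing_inv _ hIdet
    calc (I⁻¹ - H) * I * (I⁻¹ - H)
        = I⁻¹ * I * I⁻¹ - I⁻¹ * I * H - H * (I * I⁻¹) + H * I * H := by noncomm_ring
      _ = I⁻¹ - H := by rw [e2, e3, hHIH, Matrix.one_mul, Matrix.one_mul, Matrix.mul_one]; abel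
  have hMt : (I⁻¹ - H)ᵀ = I⁻¹ - H := by
    rw [Matrix.transpose_sub, Matrix.transpose_nonsing_inv, hIt, hHdef, Matrix.fromBlocks_transpose,
      Matrix.transpose_nonsing_inv, hG3t]
    simp
  refine ⟨?_, ?_, ?_⟩
  · simp only [Matrix.transpose_mul, hQt, Matrix.mul_assoc]
    show Q * ((I⁻¹ - H)ᵀ * Q) = Q * ((I⁻¹ - H) * Q)
    rw [hMt]
  · calc (Q * (I⁻¹ - H) * Q) * (Q * (I⁻¹ - H) * Q)
        = Q * ((I⁻¹ - H) * (Q * Q) * (I⁻¹ - H)) * Q := by noncomm_ring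
      _ = Q * (I⁻¹ - H) * Q := by rw [hQQ, key]
  · have hQd : IsUnit Q.det := by
      have : IsUnit (Q.det * Q.det) := by rw [← Matrix.det_mul, hQQ]; exact hIdet
      exact isUnit_of_mul_isUnit_left this
    have hMrank : (I⁻¹ - H).rank = r := by
      refine aux_rank_eq S (G2 * G3⁻¹) (G3⁻¹ * G2ᵀ) _ ?_
      rw [hM]; simp [Matrix.mul_assoc]
    rw [← hIdef, Matrix.mul_assoc, Matrix.rank_mul_eq_right_of_isUnit_det _ _ hQd,
      Matrix.rank_mul_eq_left_of_isUnit_det _ _ hQd, hMrank]
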